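/- Let O be a complete discrete valuation ring with fraction field K, and let A be a finite (finite-cardinality) commutative local O-algebra. Set E = Hom_O(A, K/O), an A-module via (a·f)(x) = f(ax). Then the natural map A → Hom_A(E, E) sending a to multiplication by a is an isomorphism of rings. -/

import Mathlib

section Setup

variable (O : Type*) [CommRing O] [IsDomain O] [IsDiscreteValuationRing O]
  [IsAdicComplete (IsLocalRing.maximalIdeal O) O]
  (K : Type*) [Field K] [Algebra O K] [IsFractionRing O K]
  (A : Type*) [CommRing A] [Algebra O A] [IsLocalRing A] [Finite A]

/-- `K/O` as an `O`-module. -/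
abbrev QKO : Type _ := K ⧸ LinearMap.range (Algebra.linearMap O K)

end Setup

section MatlisAux

universe u v

variable (O : Type u) [CommRing O] [IsDomain O] [IsDiscreteValuationRing O]
  (K : Type*) [Field K] [Algebra O K] [IsFractionRing O K]

open scoped DirectSum

namespace Stmt14Aux

abbrev QKO' : Type _ := K ⧸ LinearMap.range (Algebra.linearMap O K)

/-- algebraMap O K is injective -/
lemma algK_inj : Function.Injective (algebraMap O K) := IsFractionRing.injective O K

/-- mk y = 0 in QKO iff y in range -/
lemma mk_eq_zero_iff (y : K) :
    (Submodule.Quotient.mk y : QKO' O K) = 0 ↔ ∃ c : O, algebraMap O K c = y := by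
  rw [Submodule.Quotient.mk_eq_zero]
  exact LinearMap.mem_range

noncomputable def B (q : O) : O →ₗ[O] O →ₗ[O] QKO' O K where
  toFun c := (Submodule.mkQ _).comp
    (LinearMap.toSpanSingleton O K (algebraMap O K c / algebraMap O K q))
  map_add' c c' := by
    ext x
    simp [LinearMap.toSpanSingleton_apply, add_div, smul_add]
  map_smul' r c := by
    ext x
    simp only [LinearMap.coe_comp, Function.comp_apply, LinearMap.toSpanSingleton_apply,
      RingHom.id_apply, LinearMap.smul_apply, map_mul, Algebra.smul_def]
    rw [← map_smul]
    congr 1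
    simp [Algebra.smul_def]
    ring

lemma B_apply (q c x : O) :
    B O K q c x = Submodule.Quotient.mk (algebraMap O K x * (algebraMap O K c / algebraMap O K q)) := by
  simp [B, LinearMap.toSpanSingleton_apply, Algebra.smul_def]

lemma B_eq_zero_iff (q : O) (hq : q ≠ 0) (c x : O) :
    B O K q c x = 0 ↔ q ∣ x * c := by
  rw [B_apply, mk_eq_zero_iff]
  have hq' : algebraMap O K q ≠ 0 := fun h => hq (algK_inj O K (by simpa using h))
  constructor
  · rintro ⟨d, hd⟩
    rw [mul_div_assoc', eq_div_iff hq'] at hd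
    refine ⟨d, algK_inj O K ?_⟩
    rw [map_mul, map_mul, ← hd]; ring
  · rintro ⟨d, hd⟩
    refine ⟨d, ?_⟩
    rw [mul_div_assoc', eq_comm, div_eq_iff hq', ← map_mul, ← map_mul, hd]; ring_nf


noncomputable def theta (q : O) (hq : q ≠ 0) :
    (O ⧸ (O ∙ q)) →ₗ[O] ((O ⧸ (O ∙ q)) →ₗ[O] QKO' O K) := by
  have hq' : algebraMap O K q ≠ 0 := fun h => hq (algK_inj O K (by simpa using h))
  refine Submodule.liftQ _ (LinearMap.flip (Submodule.liftQ (O ∙ q) (B O K q).flip ?_)) ?_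
  · rw [Submodule.span_singleton_le_iff_mem, LinearMap.mem_ker]
    apply LinearMap.ext; intro c
    rw [LinearMap.zero_apply, LinearMap.flip_apply, B_apply, mk_eq_zero_iff]
    exact ⟨c, by field_simp⟩
  · rw [Submodule.span_singleton_le_iff_mem, LinearMap.mem_ker]
    apply LinearMap.ext; intro m
    obtain ⟨x, rfl⟩ := Submodule.Quotient.mk_surjective _ m
    rw [LinearMap.zero_apply, LinearMap.flip_apply, Submodule.liftQ_apply,
      LinearMap.flip_apply, B_apply, mk_eq_zero_iff]
    exact ⟨x, by field_simp⟩

lemma theta_apply (q : O) (hq : q ≠ 0) (c x : O) :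
    theta O K q hq (Submodule.Quotient.mk c) (Submodule.Quotient.mk x) = B O K q c x := by
  simp only [theta, Submodule.liftQ_apply, LinearMap.flip_apply]

lemma theta_bijective (q : O) (hq : q ≠ 0) : Function.Bijective (theta O K q hq) := by
  have hq' : algebraMap O K q ≠ 0 := fun h => hq (algK_inj O K (by simpa using h))
  constructor
  · rw [← LinearMap.ker_eq_bot, LinearMap.ker_eq_bot']
    intro m hm
    obtain ⟨c, rfl⟩ := Submodule.Quotient.mk_surjective _ m
    have h1 : theta O K q hq (Submodule.Quotient.mk c) (Submodule.Quotient.mk 1) = 0 := by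
      rw [hm]; rfl
    rw [theta_apply, B_eq_zero_iff O K q hq, one_mul] at h1
    obtain ⟨d, hd⟩ := h1
    rw [Submodule.Quotient.mk_eq_zero, Submodule.mem_span_singleton]
    exact ⟨d, by rw [smul_eq_mul, mul_comm, ← hd]⟩
  · intro f
    obtain ⟨y, hy⟩ := Submodule.Quotient.mk_surjective _ (f (Submodule.Quotient.mk 1))
    have hqy : (Submodule.Quotient.mk (q • y) : QKO' O K) = 0 := by
      rw [Submodule.Quotient.mk_smul, hy, ← map_smul, ← Submodule.Quotient.mk_smul,
        smul_eq_mul, mul_one, (Submodule.Quotient.mk_eq_zero _).mpr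
          (Submodule.mem_span_singleton_self q), map_zero]
    rw [mk_eq_zero_iff] at hqy
    obtain ⟨c, hc⟩ := hqy
    have hyc : y = algebraMap O K c / algebraMap O K q := by
      rw [eq_div_iff hq', hc, Algebra.smul_def, mul_comm]
    refine ⟨Submodule.Quotient.mk c, ?_⟩
    apply LinearMap.ext; intro m
    obtain ⟨x, rfl⟩ := Submodule.Quotient.mk_surjective _ m
    rw [theta_apply, B_apply, ← hyc]
    have : (Submodule.Quotient.mk x : O ⧸ (O ∙ q)) = x • Submodule.Quotient.mk 1 := by
      rw [← Submodule.Quotient.mk_smul, smul_eq_mul, mul_one]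
    rw [this, map_smul, ← hy, ← Submodule.Quotient.mk_smul, Algebra.smul_def]


lemma infinite_O : Infinite O := by
  obtain ⟨p, hp⟩ := IsDiscreteValuationRing.exists_irreducible O
  have key : ∀ m n : ℕ, m < n → p ^ m = p ^ n → False := by
    intro m n hlt h
    have hp0 : p ≠ 0 := hp.ne_zero
    have h2 : p ^ m * 1 = p ^ m * p ^ (n - m) := by
      rw [mul_one, ← pow_add]
      rw [h]; congr 1; omega
    have h1 : (1 : O) = p ^ (n - m) := mul_left_cancel₀ (pow_ne_zero m hp0) h2
    have : IsUnit p := by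
      have hnm : n - m = (n - m - 1) + 1 := by omega
      exact IsUnit.of_mul_eq_one (a := p) (p ^ (n - m - 1)) (by rw [mul_comm, ← pow_succ, ← hnm, ← h1])
    exact hp.not_isUnit this
  refine Infinite.of_injective (fun n : ℕ => p ^ n) ?_
  intro m n h
  simp only at h
  rcases lt_trichotomy m n with hlt | heq | hgt
  · exact absurd h (fun h => key m n hlt h)
  · exact heq
  · exact absurd h.symm (fun h => key n m hgt h)

lemma isTorsion_of_finite (M : Type*) [AddCommGroup M] [Module O M] [Finite M] :
    Module.IsTorsion O M := by
  have : Infinite O := infinite_O O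
  intro x
  have : ¬ Function.Injective (fun c : O => c • x) := _root_.not_injective_infinite_finite _
  rw [Function.not_injective_iff] at this
  obtain ⟨a, b, hab, hne⟩ := this
  refine ⟨⟨a - b, mem_nonZeroDivisors_of_ne_zero (sub_ne_zero_of_ne hne)⟩, ?_⟩
  simp only [Submonoid.mk_smul, sub_smul]
  simpa [sub_eq_zero] using hab

lemma exists_struct (M : Type v) [AddCommGroup M] [Module O M] [Finite M] :
    ∃ (ι : Type u) (_ : Fintype ι) (q : ι → O) (_ : ∀ i, q i ≠ 0),
      Nonempty (M ≃ₗ[O] ⨁ i, O ⧸ (O ∙ q i)) := by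
  have : Module.Finite O (ULift.{u} M) := Module.Finite.of_finite
  obtain ⟨ι, fι, p, hp, e, ⟨equiv⟩⟩ :=
    Module.equiv_directSum_of_isTorsion (R := O) (M := ULift.{u} M)
      (isTorsion_of_finite O (ULift.{u} M))
  exact ⟨ι, fι, fun i => p i ^ e i, fun i => pow_ne_zero _ (hp i).ne_zero,
    ⟨(ULift.moduleEquiv.symm).trans equiv⟩⟩

lemma exists_dualEquiv (M : Type v) [AddCommGroup M] [Module O M] [Finite M] :
    Nonempty (M ≃ₗ[O] (M →ₗ[O] QKO' O K)) := by
  classical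
  obtain ⟨ι, fι, q, hq, ⟨e⟩⟩ := exists_struct O M
  let Mi := fun i : ι => O ⧸ (O ∙ q i)
  let th : ∀ i, Mi i ≃ₗ[O] (Mi i →ₗ[O] QKO' O K) := fun i =>
    LinearEquiv.ofBijective (theta O K (q i) (hq i)) (theta_bijective O K (q i) (hq i))
  let E2 : (⨁ i, Mi i) ≃ₗ[O] ∀ i, Mi i := DirectSum.linearEquivFunOnFintype O ι Mi
  let E3 : (∀ i, Mi i) ≃ₗ[O] ∀ i, (Mi i →ₗ[O] QKO' O K) := LinearEquiv.piCongrRight th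
  let E4 : (∀ i, (Mi i →ₗ[O] QKO' O K)) ≃ₗ[O] ((∀ i, Mi i) →ₗ[O] QKO' O K) :=
    LinearMap.lsum O Mi O
  let E5 : ((∀ i, Mi i) →ₗ[O] QKO' O K) ≃ₗ[O] ((⨁ i, Mi i) →ₗ[O] QKO' O K) :=
    LinearEquiv.arrowCongr E2.symm (LinearEquiv.refl O (QKO' O K))
  let E6 : ((⨁ i, Mi i) →ₗ[O] QKO' O K) ≃ₗ[O] (M →ₗ[O] QKO' O K) :=
    LinearEquiv.arrowCongr e.symm (LinearEquiv.refl O (QKO' O K))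
  exact ⟨e.trans (E2.trans (E3.trans (E4.trans (E5.trans E6))))⟩

lemma separating (M : Type v) [AddCommGroup M] [Module O M] [Finite M] (a : M) (ha : a ≠ 0) :
    ∃ f : M →ₗ[O] QKO' O K, f a ≠ 0 := by
  classical
  obtain ⟨ι, fι, q, hq, ⟨e⟩⟩ := exists_struct O M
  have hea : e a ≠ 0 := fun h => ha (by simpa using congrArg e.symm h)
  have hex : ∃ i, e a i ≠ 0 := by
    by_contra h; push_neg at h
    exact hea (DFinsupp.ext h)
  obtain ⟨i, hi⟩ := hex
  refine ⟨(theta O K (q i) (hq i) (Submodule.Quotient.mk 1)).comp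
    ((DirectSum.component O ι _ i).comp e.toLinearMap), ?_⟩
  have hcomp : ((theta O K (q i) (hq i) (Submodule.Quotient.mk 1)).comp
      ((DirectSum.component O ι _ i).comp e.toLinearMap)) a
      = theta O K (q i) (hq i) (Submodule.Quotient.mk 1) (e a i) := rfl
  rw [hcomp]
  obtain ⟨x, hx⟩ := Submodule.Quotient.mk_surjective _ (e a i)
  intro h0
  apply hi
  rw [← hx] at h0 ⊢
  rw [theta_apply, B_eq_zero_iff O K _ (hq i), mul_one] at h0
  rw [Submodule.Quotient.mk_eq_zero, Submodule.mem_span_singleton]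
  obtain ⟨d, hd⟩ := h0
  exact ⟨d, by rw [smul_eq_mul, mul_comm, ← hd]⟩

end Stmt14Aux

end MatlisAux




section Setup

variable (O : Type*) [CommRing O] [IsDomain O] [IsDiscreteValuationRing O]
  [IsAdicComplete (IsLocalRing.maximalIdeal O) O]
  (K : Type*) [Field K] [Algebra O K] [IsFractionRing O K]
  (A : Type*) [CommRing A] [Algebra O A] [IsLocalRing A] [Finite A]

/-- The Matlis dual `E = Hom_O(A, K/O)` of `A`. -/
abbrev MatlisE : Type _ := A →ₗ[O] QKO O K

/-- The `A`-module structure on `E = Hom_O(A, K/O)` given by `(a·f)(x) = f(a·x)`. -/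
noncomputable instance : Module A (MatlisE O K A) where
  smul a f := f.comp (Algebra.lmul O A a)
  one_smul f := by
    show f.comp (Algebra.lmul O A 1) = f
    ext x; simp
  mul_smul a b f := by
    show f.comp (Algebra.lmul O A (a * b))
      = ((f.comp (Algebra.lmul O A b)).comp (Algebra.lmul O A a))
    ext x; simp [mul_assoc, mul_comm, mul_left_comm]
  smul_zero a := by
    show (0 : MatlisE O K A).comp (Algebra.lmul O A a) = 0
    ext x; simp
  smul_add a f g := by
    show (f + g).comp (Algebra.lmul O A a)
      = f.comp (Algebra.lmul O A a) + g.comp (Algebra.lmul O A a)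
    ext x; simp
  add_smul a b f := by
    show f.comp (Algebra.lmul O A (a + b))
      = f.comp (Algebra.lmul O A a) + f.comp (Algebra.lmul O A b)
    ext x; simp [mul_add, add_mul]
  zero_smul f := by
    show f.comp (Algebra.lmul O A 0) = 0
    ext x; simp

end Setup

/-- Matlis duality for a finite local `O`-algebra `A` over a complete DVR `O`:
with `E = Hom_O(A, K/O)`, the natural ring map `A → End_A(E)`, sending `a` to
multiplication by `a`, is an isomorphism. -/
theorem stmt14 (O : Type*) [CommRing O] [IsDomain O] [IsDiscreteValuationRing O]
    [IsAdicComplete (IsLocalRing.maximalIdeal O) O]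
    (K : Type*) [Field K] [Algebra O K] [IsFractionRing O K]
    (A : Type*) [CommRing A] [Algebra O A] [IsLocalRing A] [Finite A] :
    Function.Bijective (algebraMap A (Module.End A (MatlisE O K A))) := by
  classical
  have smul_apply : ∀ (a : A) (f : MatlisE O K A) (x : A), (a • f) x = f (a * x) :=
    fun a f x => rfl
  have alg_smul : ∀ (c : O) (f : MatlisE O K A), (algebraMap O A c) • f = c • f := by
    intro c f
    apply LinearMap.ext; intro x
    rw [smul_apply, LinearMap.smul_apply, ← Algebra.smul_def, map_smul]
  obtain ⟨W⟩ := Stmt14Aux.exists_dualEquiv O K A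
  haveI finE : Finite (MatlisE O K A) := Finite.of_equiv A W.toEquiv
  obtain ⟨W2⟩ := Stmt14Aux.exists_dualEquiv O K (MatlisE O K A)
  haveI finDE : Finite (MatlisE O K A →ₗ[O] QKO O K) := Finite.of_equiv _ W2.toEquiv
  have cardEq : Nat.card (MatlisE O K A →ₗ[O] QKO O K) = Nat.card A :=
    (Nat.card_congr W2.toEquiv.symm).trans (Nat.card_congr W.toEquiv.symm)
  let ev : A → (MatlisE O K A →ₗ[O] QKO O K) := fun a =>
    { toFun := fun f => f a
      map_add' := fun f g => rfl
      map_smul' := fun c f => rfl }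
  have ev_inj : Function.Injective ev := by
    intro a b hab
    by_contra hne
    obtain ⟨f, hf⟩ := Stmt14Aux.separating O K A (a - b) (sub_ne_zero_of_ne hne)
    apply hf
    have h1 : f a = f b := congrArg (fun g => g f) hab
    rw [map_sub, h1, sub_self]
  have ev_bij : Function.Bijective ev :=
    (Nat.bijective_iff_injective_and_card ev).mpr ⟨ev_inj, cardEq.symm⟩
  let Φ : Module.End A (MatlisE O K A) → (MatlisE O K A →ₗ[O] QKO O K) := fun g =>
    { toFun := fun f => g f 1
      map_add' := fun f f' => by
        show g (f + f') 1 = g f 1 + g f' 1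
        rw [map_add]; rfl
      map_smul' := fun c f => by
        show g (c • f) 1 = c • (g f 1)
        rw [← alg_smul, map_smul, smul_apply, mul_one, Algebra.algebraMap_eq_smul_one,
          map_smul] }
  have key : ∀ (g : Module.End A (MatlisE O K A)) (f : MatlisE O K A) (x : A),
      g f x = Φ g (x • f) := by
    intro g f x
    show g f x = g (x • f) 1
    rw [map_smul, smul_apply, mul_one]
  have Φ_inj : Function.Injective Φ := by
    intro g g' h
    apply LinearMap.ext; intro f
    apply LinearMap.ext; intro x
    rw [key g f x, key g' f x, h]
  have Φ_surj : Function.Surjective Φ := by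
    intro h
    let inner : MatlisE O K A → MatlisE O K A := fun f =>
      { toFun := fun a => h (a • f)
        map_add' := fun a b => by
          show h ((a + b) • f) = h (a • f) + h (b • f)
          rw [add_smul, map_add]
        map_smul' := fun c a => by
          show h ((c • a) • f) = c • h (a • f)
          rw [Algebra.smul_def, mul_smul, alg_smul, map_smul] }
    refine ⟨{ toFun := inner, map_add' := ?_, map_smul' := ?_ }, ?_⟩
    · intro f f'
      apply LinearMap.ext; intro a
      show h (a • (f + f')) = h (a • f) + h (a • f')
      rw [smul_add, map_add]
    · intro b f
      apply LinearMap.ext; intro a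
      show h (a • (b • f)) = h ((b * a) • f)
      rw [← mul_smul, mul_comm]
    · apply LinearMap.ext; intro f
      show h (1 • f) = h f
      rw [one_smul]
  have hcomp : Φ ∘ (algebraMap A (Module.End A (MatlisE O K A))) = ev := by
    funext a
    apply LinearMap.ext; intro f
    show (algebraMap A (Module.End A (MatlisE O K A)) a) f 1 = f a
    rw [Module.algebraMap_end_apply, smul_apply, mul_one]
  have h2 : Function.Bijective (Φ ∘ (algebraMap A (Module.End A (MatlisE O K A)))) := by
    rw [hcomp]; exact ev_bij
  exact (Function.Bijective.of_comp_iff' ⟨Φ_inj, Φ_surj⟩ _).mp h2
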